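/- Let η be a real random variable with E[η⁴] < ∞, E[η] = E[η³] = 0, and E[η²] = 1, and let F : ℝ → ℝ be three times continuously differentiable with bounded third derivative. Then E[η·F(η)] − E[η²]·E[F′(η)] = E[(η⁴/6)·F⁽³⁾(ξ₁)] − E[η²]·E[(η²/2)·F⁽³⁾(ξ₂)] for some (random) ξ₁, ξ₂ lying between 0 and η; in particular |E[η·F(η)] − E[F′(η)]| ≤ (E[η⁴]/6 + 1/2)·sup|F⁽³⁾|. -/

import Mathlib

open MeasureTheory Real Set
open scoped Nat

private lemma idw_eq {n : ℕ} {m : ℕ} {f : ℝ → ℝ} (hf : ContDiff ℝ (n : ℕ∞) f)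
    (hmn : m ≤ n) {s : Set ℝ} (hs : UniqueDiffOn ℝ s) {x : ℝ} (hx : x ∈ s) :
    iteratedDerivWithin m f s x = iteratedDeriv m f x := by
  have h := (contDiff_iff_ftaylorSeries.mp hf).hasFTaylorSeriesUpToOn s
  have h2 := h.eq_iteratedFDerivWithin_of_uniqueDiffOn (m := m) (by exact_mod_cast hmn) hs hx
  rw [iteratedDerivWithin_eq_iteratedFDerivWithin, iteratedDeriv_eq_iteratedFDeriv, ← h2]
  rfl

private lemma taylor_pos (n : ℕ) (F : ℝ → ℝ) (hF : ContDiff ℝ ((n : ℕ) + 1 : ℕ) F) {x : ℝ}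
    (hx : 0 < x) :
    ∃ ξ ∈ Set.Ioo 0 x, F x = (∑ k ∈ Finset.range (n + 1), x ^ k / (k ! : ℝ) * iteratedDeriv k F 0)
      + x ^ (n + 1) / ((n + 1)! : ℝ) * iteratedDeriv (n + 1) F ξ := by
  have hud : UniqueDiffOn ℝ (Icc 0 x) := uniqueDiffOn_Icc hx
  have hFn : ContDiff ℝ (n : ℕ) F := hF.of_le (by exact_mod_cast n.le_succ)
  have hf : ContDiffOn ℝ n F (Icc 0 x) := hFn.contDiffOn
  have hdiff : Differentiable ℝ (iteratedDeriv n F) :=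
    hF.differentiable_iteratedDeriv n (by exact_mod_cast n.lt_succ_self)
  have hf' : DifferentiableOn ℝ (iteratedDerivWithin n F (Icc 0 x)) (Ioo 0 x) := by
    apply DifferentiableOn.congr (hdiff.differentiableOn)
    intro y hy
    exact idw_eq hF n.le_succ hud (Ioo_subset_Icc_self hy)
  obtain ⟨ξ, hξ, hT⟩ := taylor_mean_remainder_lagrange (n := n) hx.ne
    (by rwa [uIcc_of_le hx.le]) (by rwa [uIcc_of_le hx.le, uIoo_of_le hx.le])
  rw [uIoo_of_le hx.le] at hξ
  rw [uIcc_of_le hx.le] at hT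
  refine ⟨ξ, hξ, ?_⟩
  rw [taylor_within_apply] at hT
  have hsum : ∀ k ∈ Finset.range (n + 1),
      ((k ! : ℝ)⁻¹ * (x - 0) ^ k) • iteratedDerivWithin k F (Icc 0 x) 0
        = x ^ k / (k ! : ℝ) * iteratedDeriv k F 0 := by
    intro k hk
    have hk' : k ≤ n := by have := Finset.mem_range.mp hk; omega
    rw [idw_eq hF (hk'.trans n.le_succ) hud (left_mem_Icc.mpr hx.le), smul_eq_mul, sub_zero]
    ring
  rw [Finset.sum_congr rfl hsum] at hT
  rw [idw_eq hF le_rfl hud (Ioo_subset_Icc_self hξ)] at hT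
  have := hT
  rw [sub_eq_iff_eq_add] at this
  rw [this]
  simp only [sub_zero]
  ring

private lemma taylor_uIcc (n : ℕ) (F : ℝ → ℝ) (hF : ContDiff ℝ ((n : ℕ) + 1 : ℕ) F) (x : ℝ) :
    ∃ ξ ∈ Set.uIcc 0 x, F x = (∑ k ∈ Finset.range (n + 1), x ^ k / (k ! : ℝ) * iteratedDeriv k F 0)
      + x ^ (n + 1) / ((n + 1)! : ℝ) * iteratedDeriv (n + 1) F ξ := by
  rcases lt_trichotomy x 0 with hx | hx | hx
  · -- reflect
    have hG : ContDiff ℝ ((n : ℕ) + 1 : ℕ) (fun t => F (-t)) := hF.comp (contDiff_neg)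
    obtain ⟨ξ, hξ, hT⟩ := taylor_pos n _ hG (x := -x) (by linarith)
    refine ⟨-ξ, ?_, ?_⟩
    · have hm := Set.mem_Ioo.mp hξ
      have h1 : -ξ ∈ Ioo x 0 := ⟨by linarith [hm.2], by linarith [hm.1]⟩
      exact Set.uIcc_comm 0 x ▸ Set.Icc_subset_uIcc (Ioo_subset_Icc_self h1)
    · have hcn : ∀ k (y : ℝ), iteratedDeriv k (fun t => F (-t)) y
          = (-1 : ℝ) ^ k * iteratedDeriv k F (-y) := by
        intro k y
        simpa [smul_eq_mul] using iteratedDeriv_comp_neg k F y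
      simp only [neg_neg] at hT
      rw [hT]
      congr 1
      · refine Finset.sum_congr rfl fun k _ => ?_
        rw [hcn, neg_zero, neg_pow]
        have hsq : ((-1 : ℝ)) ^ k * (-1) ^ k = 1 := by
          rw [← pow_add, ← two_mul, pow_mul]; norm_num
        linear_combination x ^ k / (k ! : ℝ) * iteratedDeriv k F 0 * hsq
      · rw [hcn, neg_pow]
        have hsq : ((-1 : ℝ)) ^ (n + 1) * (-1) ^ (n + 1) = 1 := by
          rw [← pow_add, ← two_mul, pow_mul]; norm_num
        linear_combination x ^ (n + 1) / ((n + 1)! : ℝ) * iteratedDeriv (n + 1) F (-ξ) * hsq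
  · refine ⟨0, by simp [hx], ?_⟩
    subst hx
    rw [Finset.sum_eq_single 0]
    · simp
    · intro k _ hk
      simp [zero_pow hk]
    · simp
  · obtain ⟨ξ, hξ, hT⟩ := taylor_pos n F hF hx
    exact ⟨ξ, Set.Icc_subset_uIcc (Ioo_subset_Icc_self hξ), hT⟩

private lemma taylor3 (F : ℝ → ℝ) (hF : ContDiff ℝ 3 F) (x : ℝ) :
    ∃ ξ ∈ Set.uIcc 0 x, F x = F 0 + x * deriv F 0 + x ^ 2 / 2 * iteratedDeriv 2 F 0
      + x ^ 3 / 6 * iteratedDeriv 3 F ξ := by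
  obtain ⟨ξ, hξ, hT⟩ := taylor_uIcc 2 F (by exact_mod_cast hF) x
  refine ⟨ξ, hξ, ?_⟩
  rw [hT]
  rw [Finset.sum_range_succ, Finset.sum_range_succ, Finset.sum_range_one]
  norm_num [iteratedDeriv_one, Nat.factorial]

private lemma taylor2 (F : ℝ → ℝ) (hF : ContDiff ℝ 3 F) (x : ℝ) :
    ∃ ξ ∈ Set.uIcc 0 x, deriv F x = deriv F 0 + x * iteratedDeriv 2 F 0
      + x ^ 2 / 2 * iteratedDeriv 3 F ξ := by
  have hF' : ContDiff ℝ ((1 : ℕ) + 1 : ℕ) (deriv F) := by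
    have h := ContDiff.iterate_deriv' 2 1 (f := F) (by exact_mod_cast hF)
    simpa using h
  obtain ⟨ξ, hξ, hT⟩ := taylor_uIcc 1 (deriv F) hF' x
  refine ⟨ξ, hξ, ?_⟩
  rw [hT]
  rw [Finset.sum_range_succ, Finset.sum_range_one]
  have e1 : iteratedDeriv 1 (deriv F) = iteratedDeriv 2 F :=
    (iteratedDeriv_succ' (n := 1) (f := F)).symm
  have e2 : iteratedDeriv 2 (deriv F) = iteratedDeriv 3 F :=
    (iteratedDeriv_succ' (n := 2) (f := F)).symm
  rw [e1, e2]
  norm_num [iteratedDeriv_one, Nat.factorial]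

private lemma abs_le_one_add_pow4 (t : ℝ) : |t| ≤ 1 + t ^ 4 := by
  have h4a : |t| ^ 4 = t ^ 4 := by
    rw [← abs_pow]; exact abs_of_nonneg (by positivity)
  nlinarith [abs_nonneg t, sq_nonneg (|t| - 1), sq_nonneg (|t| ^ 2 - 1), sq_nonneg (|t| + 1),
    sq_nonneg (|t| ^ 2 - |t|)]

private lemma sq_le_one_add_pow4 (t : ℝ) : |t ^ 2| ≤ 1 + t ^ 4 := by
  rw [abs_of_nonneg (by positivity)]
  nlinarith [sq_nonneg (t ^ 2 - 1), sq_nonneg t]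

private lemma cube_le_one_add_pow4 (t : ℝ) : |t ^ 3| ≤ 1 + t ^ 4 := by
  have h3a : |t ^ 3| = |t| ^ 3 := abs_pow t 3
  have h4a : |t| ^ 4 = t ^ 4 := by
    rw [← abs_pow]; exact abs_of_nonneg (by positivity)
  nlinarith [abs_nonneg t, sq_nonneg (|t| ^ 2 - |t|), sq_nonneg (|t| ^ 2 - 1), sq_nonneg (|t| - 1)]

/-- Non-Gaussian integration by parts. -/
theorem nongaussian_integration_by_parts
    {Ω : Type*} [MeasurableSpace Ω] (μ : Measure Ω) [IsProbabilityMeasure μ]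
    (η : Ω → ℝ) (hη : Measurable η)
    (h4 : Integrable (fun ω => (η ω) ^ 4) μ)
    (hmean : ∫ ω, η ω ∂μ = 0) (h3 : ∫ ω, (η ω) ^ 3 ∂μ = 0)
    (h2 : ∫ ω, (η ω) ^ 2 ∂μ = 1)
    (F : ℝ → ℝ) (hF : ContDiff ℝ 3 F) (M : ℝ)
    (hM : ∀ x, |iteratedDeriv 3 F x| ≤ M)
    (hint1 : Integrable (fun ω => η ω * F (η ω)) μ)
    (hint2 : Integrable (fun ω => deriv F (η ω)) μ) :
    (∃ ξ₁ ξ₂ : Ω → ℝ,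
      (∀ ω, ξ₁ ω ∈ Set.uIcc 0 (η ω)) ∧ (∀ ω, ξ₂ ω ∈ Set.uIcc 0 (η ω)) ∧
      (∫ ω, η ω * F (η ω) ∂μ) - (∫ ω, (η ω) ^ 2 ∂μ) * (∫ ω, deriv F (η ω) ∂μ)
        = (∫ ω, (η ω) ^ 4 / 6 * iteratedDeriv 3 F (ξ₁ ω) ∂μ)
          - (∫ ω, (η ω) ^ 2 ∂μ) * (∫ ω, (η ω) ^ 2 / 2 * iteratedDeriv 3 F (ξ₂ ω) ∂μ)) ∧
    |(∫ ω, η ω * F (η ω) ∂μ) - ∫ ω, deriv F (η ω) ∂μ|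
      ≤ ((∫ ω, (η ω) ^ 4 ∂μ) / 6 + 1 / 2) * M := by
  -- integrability of lower moments
  have hG : Integrable (fun ω => 1 + η ω ^ 4) μ := (integrable_const 1).add h4
  have hI1 : Integrable (fun ω => η ω) μ :=
    hG.mono' hη.aestronglyMeasurable (Filter.Eventually.of_forall fun ω => by
      simpa using abs_le_one_add_pow4 (η ω))
  have hI2 : Integrable (fun ω => η ω ^ 2) μ :=
    hG.mono' (hη.pow_const 2).aestronglyMeasurable (Filter.Eventually.of_forall fun ω => by
      simpa using sq_le_one_add_pow4 (η ω))
  have hI3 : Integrable (fun ω => η ω ^ 3) μ :=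
    hG.mono' (hη.pow_const 3).aestronglyMeasurable (Filter.Eventually.of_forall fun ω => by
      simpa using cube_le_one_add_pow4 (η ω))
  -- choose the intermediate points
  choose ξ₁ hmem1 heq1 using fun ω => taylor3 F hF (η ω)
  choose ξ₂ hmem2 heq2 using fun ω => taylor2 F hF (η ω)
  -- pointwise identities
  have hA : (fun ω => η ω ^ 4 / 6 * iteratedDeriv 3 F (ξ₁ ω))
      = fun ω => η ω * F (η ω)
        - (η ω * F 0 + η ω ^ 2 * deriv F 0 + η ω ^ 3 / 2 * iteratedDeriv 2 F 0) := by
    funext ω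
    linear_combination (-(η ω)) * heq1 ω
  have hB : (fun ω => η ω ^ 2 / 2 * iteratedDeriv 3 F (ξ₂ ω))
      = fun ω => deriv F (η ω) - (deriv F 0 + η ω * iteratedDeriv 2 F 0) := by
    funext ω
    linear_combination (-1 : ℝ) * heq2 ω
  -- integrability of the remainders
  have ia1 : Integrable (fun ω => η ω * F 0) μ := hI1.mul_const _
  have ia2 : Integrable (fun ω => η ω ^ 2 * deriv F 0) μ := hI2.mul_const _
  have ia3 : Integrable (fun ω => η ω ^ 3 / 2 * iteratedDeriv 2 F 0) μ :=
    (hI3.div_const 2).mul_const _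
  have ia12 : Integrable (fun ω => η ω * F 0 + η ω ^ 2 * deriv F 0) μ := ia1.add ia2
  have ia123 : Integrable (fun ω => η ω * F 0 + η ω ^ 2 * deriv F 0
      + η ω ^ 3 / 2 * iteratedDeriv 2 F 0) μ := ia12.add ia3
  have ib1 : Integrable (fun _ : Ω => deriv F 0) μ := integrable_const _
  have ib2 : Integrable (fun ω => η ω * iteratedDeriv 2 F 0) μ := hI1.mul_const _
  have ib12 : Integrable (fun ω => deriv F 0 + η ω * iteratedDeriv 2 F 0) μ := ib1.add ib2
  have intRA : Integrable (fun ω => η ω * F (η ω)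
      - (η ω * F 0 + η ω ^ 2 * deriv F 0 + η ω ^ 3 / 2 * iteratedDeriv 2 F 0)) μ :=
    hint1.sub ia123
  have intRB : Integrable (fun ω => deriv F (η ω)
      - (deriv F 0 + η ω * iteratedDeriv 2 F 0)) μ :=
    hint2.sub ib12
  have intA : Integrable (fun ω => η ω ^ 4 / 6 * iteratedDeriv 3 F (ξ₁ ω)) μ := by
    rw [hA]; exact intRA
  have intB : Integrable (fun ω => η ω ^ 2 / 2 * iteratedDeriv 3 F (ξ₂ ω)) μ := by
    rw [hB]; exact intRB
  -- integral identities
  have iA : (∫ ω, η ω ^ 4 / 6 * iteratedDeriv 3 F (ξ₁ ω) ∂μ)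
      = (∫ ω, η ω * F (η ω) ∂μ) - deriv F 0 := by
    rw [hA, integral_sub hint1 ia123,
      integral_add ia12 ia3,
      integral_add ia1 ia2,
      integral_mul_const, integral_mul_const, integral_mul_const, integral_div,
      hmean, h2, h3]
    ring
  have iB : (∫ ω, η ω ^ 2 / 2 * iteratedDeriv 3 F (ξ₂ ω) ∂μ)
      = (∫ ω, deriv F (η ω) ∂μ) - deriv F 0 := by
    rw [hB, integral_sub hint2 ib12,
      integral_add ib1 ib2,
      integral_const, integral_mul_const, hmean]
    simp
  refine ⟨⟨ξ₁, ξ₂, hmem1, hmem2, ?_⟩, ?_⟩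
  · rw [h2, iA, iB]; ring
  · have hM0 : 0 ≤ M := le_trans (abs_nonneg _) (hM 0)
    have est1 : |∫ ω, η ω ^ 4 / 6 * iteratedDeriv 3 F (ξ₁ ω) ∂μ|
        ≤ (∫ ω, η ω ^ 4 ∂μ) / 6 * M := by
      calc |∫ ω, η ω ^ 4 / 6 * iteratedDeriv 3 F (ξ₁ ω) ∂μ|
          ≤ ∫ ω, |η ω ^ 4 / 6 * iteratedDeriv 3 F (ξ₁ ω)| ∂μ := by
            exact
              norm_integral_le_integral_norm (μ := μ) (fun ω => η ω ^ 4 / 6 * iteratedDeriv 3 F (ξ₁ ω))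
        _ ≤ ∫ ω, η ω ^ 4 / 6 * M ∂μ := by
            refine integral_mono intA.abs ((h4.div_const 6).mul_const M) fun ω => ?_
            rw [abs_mul, abs_of_nonneg (show (0:ℝ) ≤ η ω ^ 4 / 6 by positivity)]
            exact mul_le_mul_of_nonneg_left (hM _) (by positivity)
        _ = (∫ ω, η ω ^ 4 ∂μ) / 6 * M := by rw [integral_mul_const, integral_div]
    have est2 : |∫ ω, η ω ^ 2 / 2 * iteratedDeriv 3 F (ξ₂ ω) ∂μ| ≤ 1 / 2 * M := by
      calc |∫ ω, η ω ^ 2 / 2 * iteratedDeriv 3 F (ξ₂ ω) ∂μ|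
          ≤ ∫ ω, |η ω ^ 2 / 2 * iteratedDeriv 3 F (ξ₂ ω)| ∂μ := by
            exact
              norm_integral_le_integral_norm (μ := μ) (fun ω => η ω ^ 2 / 2 * iteratedDeriv 3 F (ξ₂ ω))
        _ ≤ ∫ ω, η ω ^ 2 / 2 * M ∂μ := by
            refine integral_mono intB.abs ((hI2.div_const 2).mul_const M) fun ω => ?_
            rw [abs_mul, abs_of_nonneg (show (0:ℝ) ≤ η ω ^ 2 / 2 by positivity)]
            exact mul_le_mul_of_nonneg_left (hM _) (by positivity)
        _ = 1 / 2 * M := by rw [integral_mul_const, integral_div, h2]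
    have key : (∫ ω, η ω * F (η ω) ∂μ) - ∫ ω, deriv F (η ω) ∂μ
        = (∫ ω, η ω ^ 4 / 6 * iteratedDeriv 3 F (ξ₁ ω) ∂μ)
          - ∫ ω, η ω ^ 2 / 2 * iteratedDeriv 3 F (ξ₂ ω) ∂μ := by
      rw [iA, iB]; ring
    rw [key]
    calc |(∫ ω, η ω ^ 4 / 6 * iteratedDeriv 3 F (ξ₁ ω) ∂μ)
          - ∫ ω, η ω ^ 2 / 2 * iteratedDeriv 3 F (ξ₂ ω) ∂μ|
        ≤ |∫ ω, η ω ^ 4 / 6 * iteratedDeriv 3 F (ξ₁ ω) ∂μ|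
          + |∫ ω, η ω ^ 2 / 2 * iteratedDeriv 3 F (ξ₂ ω) ∂μ| := abs_sub _ _
      _ ≤ (∫ ω, η ω ^ 4 ∂μ) / 6 * M + 1 / 2 * M := add_le_add est1 est2
      _ = ((∫ ω, η ω ^ 4 ∂μ) / 6 + 1 / 2) * M := by ring
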